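/- Let p be a prime, s ≥ 1, and let j = p^s - p^{s-1} - 1 and n = p^s - 1. If k is an integer with j < k ≤ n - 1 whose base-p expansion has at least two digits differing from p-1 in positions 0 through s-2 (with top digit p-1), then C(k, j) ≡ 0 (mod p²). -/

import Mathlib

theorem stmt_11 (p : ℕ) (hp : p.Prime) (s : ℕ) (hs : 2 ≤ s) (k : ℕ)
    (hk1 : p ^ s - p ^ (s - 1) - 1 < k) (hk2 : k ≤ p ^ s - 2)
    (htop : k / p ^ (s - 1) % p = p - 1)
    (htwo : 2 ≤ ((Finset.range (s - 1)).filter (fun i => k / p ^ i % p < p - 1)).card) :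
    p ^ 2 ∣ k.choose (p ^ s - p ^ (s - 1) - 1) := by
  obtain ⟨j, hj⟩ : ∃ j, j = p ^ s - p ^ (s - 1) - 1 := ⟨_, rfl⟩
  rw [← hj] at hk1 ⊢
  have hp2 := hp.two_le
  have hps : p ^ (s-1) < p ^ s := Nat.pow_lt_pow_right hp.one_lt (by omega)
  have hps1 : 2 ≤ p ^ (s-1) := le_trans hp2 (Nat.le_self_pow (by omega) p)
  have hjk : j ≤ k := hk1.le
  have hk0 : k < p ^ s := by omega
  have hkne : k ≠ 0 := by omega
  have hlog : Nat.log p k < s := Nat.log_lt_of_lt_pow hkne hk0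
  -- j % p^(t+1) = p^(t+1) - 1 for t ≤ s-2
  have hjmod : ∀ t, t < s - 1 → j % p ^ (t+1) = p ^ (t+1) - 1 := by
    intro t ht
    have hd : p ^ (t+1) ∣ (j + 1) := by
      have hje : j + 1 = p ^ s - p ^ (s-1) := by omega
      rw [hje]
      exact Nat.dvd_sub (pow_dvd_pow p (by omega)) (pow_dvd_pow p (by omega))
    obtain ⟨c, hc⟩ := hd
    have hpt : 1 ≤ p ^ (t+1) := Nat.one_le_pow _ _ (by omega)
    have hc1 : 1 ≤ c := Nat.pos_of_ne_zero (by rintro rfl; simp at hc)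
    obtain ⟨c', rfl⟩ : ∃ c', c = c' + 1 := ⟨c - 1, by omega⟩
    rw [Nat.mul_succ] at hc
    have heq : j = p ^ (t+1) * c' + (p ^ (t+1) - 1) := by omega
    rw [heq, Nat.mul_add_mod]
    exact Nat.mod_eq_of_lt (by omega)
  have key := Nat.Prime.emultiplicity_choose hp hjk hlog
  have hcard : 2 ≤ ((Finset.Ico 1 s).filter
      (fun i => p ^ i ≤ j % p ^ i + (k - j) % p ^ i)).card := by
    refine le_trans htwo (Finset.card_le_card_of_injOn (fun t => t + 1) ?_ ?_)
    · intro t ht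
      simp only [Finset.mem_coe, Finset.mem_filter, Finset.mem_range] at ht
      obtain ⟨ht1, ht2⟩ := ht
      simp only [Finset.mem_coe, Finset.mem_filter, Finset.mem_Ico]
      refine ⟨⟨by omega, by omega⟩, ?_⟩
      have hjm := hjmod t ht1
      have hpt : 1 ≤ p ^ t := Nat.one_le_pow _ _ (by omega)
      have hpt1 : 1 ≤ p ^ (t+1) := Nat.one_le_pow _ _ (by omega)
      have hne : (k - j) % p ^ (t+1) ≠ 0 := by
        intro h0
        have hdvd : p ^ (t+1) ∣ k - j := Nat.dvd_of_mod_eq_zero h0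
        have hkm : k % p ^ (t+1) = p ^ (t+1) - 1 := by
          obtain ⟨d, hd⟩ := hdvd
          have hke : k = j + p ^ (t+1) * d := by omega
          rw [hke, Nat.add_mul_mod_self_left, hjm]
        have hsplit : p ^ (t+1) - 1 = p ^ t * (p - 1) + (p ^ t - 1) := by
          have h1 : p ^ (t+1) = p ^ t * p := pow_succ p t
          have h2 : p ^ t * p = p ^ t * (p - 1) + p ^ t := by
            rw [← Nat.mul_succ]
            congr 1
            omega
          omega
        have hdig : k / p ^ t % p = p - 1 := by
          have h1 : k / p ^ t % p = k % (p ^ t * p) / p ^ t :=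
            (Nat.mod_mul_right_div_self k (p ^ t) p).symm
          rw [h1, ← pow_succ, hkm, hsplit, Nat.mul_add_div (by omega),
            Nat.div_eq_of_lt (by omega)]
          omega
        omega
      have h1 : 1 ≤ (k - j) % p ^ (t+1) := Nat.one_le_iff_ne_zero.mpr hne
      rw [hjm]
      omega
    · intro a _ b _ h; simpa using h
  have h2 : (2 : ℕ∞) ≤ emultiplicity p (k.choose j) := by
    rw [key]
    exact_mod_cast hcard
  exact pow_dvd_of_le_emultiplicity h2
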